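/- For two locks, the blocking types (P_1P_1, P_1), (P_1, P_1P_1), and (P_1, P_1) are impossible for a correct compositional translation: in each case one can construct an execution of the translation of a must-convergent SYNCSIMPLE process (e.g. !✓ | ?✓ or ! | ?✓) that ends in a deadlock. -/

import Mathlib

/-- Symbols of SYNCSIMPLE: `!` (bang) and `?` (ques). -/
inductive SSym | bang | ques
deriving DecidableEq

/-- A SYNCSIMPLE subprocess: a string over {!,?} ending with `0` (false) or `✓` (true). -/
abbrev SSub := List SSym × Bool

/-- A SYNCSIMPLE process: a multiset of subprocesses. -/
abbrev SProc := Multiset SSub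

/-- The SYS reduction: a leading `!` and a leading `?` of two subprocesses are consumed. -/
def SysStep (P Q : SProc) : Prop :=
  ∃ (u1 u2 : List SSym) (b1 b2 : Bool) (R : SProc),
    P = (SSym.bang :: u1, b1) ::ₘ (SSym.ques :: u2, b2) ::ₘ R ∧
    Q = (u1, b1) ::ₘ (u2, b2) ::ₘ R

/-- A process is successful if it contains the subprocess `✓`. -/
def SSuccessful (P : SProc) : Prop := (([], true) : SSub) ∈ P

def SMayConv (P : SProc) : Prop :=
  ∃ Q, Relation.ReflTransGen SysStep P Q ∧ SSuccessful Q

def SMustConv (P : SProc) : Prop :=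
  ∀ Q, Relation.ReflTransGen SysStep P Q → SMayConv Q

/-- Lock operations: put `P_i` and take `T_i`. -/
inductive LOp | put | take
deriving DecidableEq

abbrev LSym (k : ℕ) := LOp × Fin k
abbrev LSub (k : ℕ) := List (LSym k) × Bool
abbrev LProc (k : ℕ) := Multiset (LSub k)
/-- The store of `k` locks: `true` = full (■), `false` = empty (□). -/
abbrev Store (k : ℕ) := Fin k → Bool

/-- LOCKSIMPLE step: `P_i` fills an empty lock `i` (blocks if full);
    `T_i` empties lock `i` and never blocks. -/
def LockStep {k : ℕ} : (LProc k × Store k) → (LProc k × Store k) → Prop :=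
  fun s t => ∃ (i : Fin k) (u : List (LSym k)) (b : Bool) (R : LProc k),
    ((s.1 = ((LOp.put, i) :: u, b) ::ₘ R ∧ s.2 i = false ∧
      t.1 = (u, b) ::ₘ R ∧ t.2 = Function.update s.2 i true) ∨
     (s.1 = ((LOp.take, i) :: u, b) ::ₘ R ∧
      t.1 = (u, b) ::ₘ R ∧ t.2 = Function.update s.2 i false))

def LSuccessful {k : ℕ} (s : LProc k × Store k) : Prop := (([], true) : LSub k) ∈ s.1

def LMayConv {k : ℕ} (s : LProc k × Store k) : Prop :=
  ∃ t, Relation.ReflTransGen LockStep s t ∧ LSuccessful t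

def LMustConv {k : ℕ} (s : LProc k × Store k) : Prop :=
  ∀ t, Relation.ReflTransGen LockStep s t → LMayConv t

/-- The compositional translation determined by the strings `tb = τ(!)` and `tq = τ(?)`,
    applied to a subprocess. -/
def transSub {k : ℕ} (tb tq : List (LSym k)) (u : SSub) : LSub k :=
  (u.1.flatMap (fun c => match c with | SSym.bang => tb | SSym.ques => tq), u.2)

/-- The compositional translation applied to a process. -/
def transProc {k : ℕ} (tb tq : List (LSym k)) (P : SProc) : LProc k :=
  P.map (transSub tb tq)

/-- Correctness of the compositional translation `(tb, tq)` with initial store `IS`: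
    may- and must-convergence are preserved and reflected. -/
def Correct {k : ℕ} (IS : Store k) (tb tq : List (LSym k)) : Prop :=
  ∀ P : SProc,
    (SMayConv P ↔ LMayConv (transProc tb tq P, IS)) ∧
    (SMustConv P ↔ LMustConv (transProc tb tq P, IS))

/-- The solo execution of the string `s` from store `IS` reaches the point where
    `(put, i) :: rest` remains and deadlocks there since lock `i` is full. -/
def SoloBlocked {k : ℕ} (IS : Store k) (s : List (LSym k)) (i : Fin k)
    (rest : List (LSym k)) : Prop :=
  ∃ C : Store k,
    Relation.ReflTransGen LockStep (({(s, false)} : LProc k), IS)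
      (({((LOp.put, i) :: rest, false)} : LProc k), C) ∧
    C i = true

/-- Blocking type `P_i`: the blocking prefix is `R P_i` with `R` free of `P_i, T_i`. -/
def BlockingTypeP {k : ℕ} (IS : Store k) (s : List (LSym k)) (i : Fin k) : Prop :=
  ∃ r rest, s = r ++ (LOp.put, i) :: rest ∧ (∀ x ∈ r, x.2 ≠ i) ∧
    SoloBlocked IS s i rest

/-- Blocking type `P_i P_i`: the blocking prefix is `R₁ P_i R₂ P_i` with
    `R₂` free of `P_i, T_i`, deadlocking exactly before the last `P_i`. -/
def BlockingTypePP {k : ℕ} (IS : Store k) (s : List (LSym k)) (i : Fin k) : Prop :=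
  ∃ r1 r2 rest, s = r1 ++ (LOp.put, i) :: r2 ++ (LOp.put, i) :: rest ∧
    (∀ x ∈ r2, x.2 ≠ i) ∧ SoloBlocked IS s i rest
section AuxProof

lemma rtg_stuck {α} {r : α → α → Prop} {x : α} (h : ∀ y, ¬ r x y) :
    ∀ y, Relation.ReflTransGen r x y → y = x := by
  intro y hy
  induction hy with
  | refl => rfl
  | tail h1 h2 ih => exact absurd (ih ▸ h2) (h _)

lemma lift_chain {p q : LProc 2 × Store 2} (h : Relation.ReflTransGen LockStep p q) :
    ∀ (u v : List (LSym 2)) (S S' : Store 2), p = ({(u, false)}, S) → q = ({(v, false)}, S') →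
    ∀ (b : Bool) (R : LProc 2),
      Relation.ReflTransGen LockStep ((u, b) ::ₘ R, S) ((v, b) ::ₘ R, S') := by
  induction h with
  | refl =>
    intro u v S S' hp hq b R
    rw [hp] at hq
    simp only [Prod.mk.injEq, Multiset.singleton_inj] at hq
    obtain ⟨⟨hu, -⟩, hS⟩ := hq
    rw [hu, hS]
  | @tail m q h1 h2 ih =>
    intro u v S S' hp hq b R
    subst hp hq
    obtain ⟨i, w, bw, R', hc⟩ := h2
    rcases hc with ⟨hm1, hmi, hq1, hq2⟩ | ⟨hm1, hq1, hq2⟩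
    · rw [Multiset.singleton_eq_cons_iff] at hq1
      obtain ⟨hvw, hR'⟩ := hq1
      obtain ⟨hv, hbw⟩ := Prod.mk.injEq .. ▸ hvw
      subst hv hbw hR'
      have hm1' : m = ({((LOp.put, i) :: v, false)}, m.2) := by
        ext1
        · rw [hm1]; rfl
        · rfl
      have hpre := ih u ((LOp.put, i) :: v) S m.2 rfl hm1' b R
      refine hpre.tail ⟨i, v, b, R, Or.inl ⟨rfl, hmi, rfl, hq2⟩⟩
    · rw [Multiset.singleton_eq_cons_iff] at hq1
      obtain ⟨hvw, hR'⟩ := hq1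
      obtain ⟨hv, hbw⟩ := Prod.mk.injEq .. ▸ hvw
      subst hv hbw hR'
      have hm1' : m = ({((LOp.take, i) :: v, false)}, m.2) := by
        ext1
        · rw [hm1]; rfl
        · rfl
      have hpre := ih u ((LOp.take, i) :: v) S m.2 rfl hm1' b R
      refine hpre.tail ⟨i, v, b, R, Or.inr ⟨rfl, rfl, hq2⟩⟩

lemma run_free : ∀ (r : List (LSym 2)) (S : Store 2), (∀ x ∈ r, x.2 ≠ 0) → S 0 = true →
    ∀ (rest : List (LSym 2)) (b : Bool) (m : LSub 2),
    ∃ (j : Fin 2) (l : List (LSym 2)) (C : Store 2),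
      Relation.ReflTransGen LockStep ((r ++ (LOp.put, (0 : Fin 2)) :: rest, b) ::ₘ {m}, S)
        (((LOp.put, j) :: l, b) ::ₘ {m}, C) ∧ C j = true ∧ C 0 = true := by
  intro r
  induction r with
  | nil =>
    intro S _ hS0 rest b m
    exact ⟨0, rest, S, Relation.ReflTransGen.refl, hS0, hS0⟩
  | cons x r ih =>
    intro S hfree hS0 rest b m
    obtain ⟨op, i⟩ := x
    have hi : i = 1 := by
      have h0 : i ≠ 0 := hfree (op, i) List.mem_cons_self
      omega
    subst hi
    have hupd0 : ∀ (v : Bool), Function.update S 1 v 0 = S 0 := by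
      intro v; exact Function.update_of_ne (by decide) _ _
    cases op with
    | take =>
      have step : LockStep
          (((LOp.take, (1 : Fin 2)) :: (r ++ (LOp.put, (0 : Fin 2)) :: rest), b) ::ₘ {m}, S)
          ((r ++ (LOp.put, (0 : Fin 2)) :: rest, b) ::ₘ {m}, Function.update S 1 false) :=
        ⟨1, _, b, {m}, Or.inr ⟨rfl, rfl, rfl⟩⟩
      obtain ⟨j, l, C, hch, h1, h2⟩ := ih (Function.update S 1 false)
        (fun y hy => hfree y (List.mem_cons_of_mem _ hy)) ((hupd0 false).trans hS0) rest b m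
      exact ⟨j, l, C, Relation.ReflTransGen.head step hch, h1, h2⟩
    | put =>
      cases hS1 : S 1 with
      | true =>
        exact ⟨1, r ++ (LOp.put, (0 : Fin 2)) :: rest, S, Relation.ReflTransGen.refl, hS1, hS0⟩
      | false =>
        have step : LockStep
            (((LOp.put, (1 : Fin 2)) :: (r ++ (LOp.put, (0 : Fin 2)) :: rest), b) ::ₘ {m}, S)
            ((r ++ (LOp.put, (0 : Fin 2)) :: rest, b) ::ₘ {m}, Function.update S 1 true) :=
          ⟨1, _, b, {m}, Or.inl ⟨rfl, hS1, rfl, rfl⟩⟩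
        obtain ⟨j, l, C, hch, h1, h2⟩ := ih (Function.update S 1 true)
          (fun y hy => hfree y (List.mem_cons_of_mem _ hy)) ((hupd0 true).trans hS0) rest b m
        exact ⟨j, l, C, Relation.ReflTransGen.head step hch, h1, h2⟩

lemma deadlock_no_may (j1 j2 : Fin 2) (l1 l2 : List (LSym 2)) (b1 b2 : Bool) (C : Store 2)
    (h1 : C j1 = true) (h2 : C j2 = true) :
    ¬ LMayConv ((((LOp.put, j1) :: l1, b1) ::ₘ {((LOp.put, j2) :: l2, b2)} : LProc 2), C) := by
  set D : LProc 2 × Store 2 :=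
    ((((LOp.put, j1) :: l1, b1) ::ₘ {((LOp.put, j2) :: l2, b2)} : LProc 2), C) with hD
  have hstuck : ∀ t, ¬ LockStep D t := by
    rintro t ⟨i, u, b, R, hc⟩
    rcases hc with ⟨hm, hfalse, -, -⟩ | ⟨hm, -, -⟩
    · have hmem : ((LOp.put, i) :: u, b) ∈ D.1 := hm ▸ Multiset.mem_cons_self _ _
      have hCi : C i = false := hfalse
      simp only [hD] at hmem
      rcases Multiset.mem_cons.mp hmem with he | he
      · injection he with hl hb
        injection hl with hh ht
        injection hh with ho hi
        rw [hi, h1] at hCi; exact Bool.noConfusion hCi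
      · rw [Multiset.mem_singleton] at he
        injection he with hl hb
        injection hl with hh ht
        injection hh with ho hi
        rw [hi, h2] at hCi; exact Bool.noConfusion hCi
    · have hmem : ((LOp.take, i) :: u, b) ∈ D.1 := hm ▸ Multiset.mem_cons_self _ _
      simp only [hD] at hmem
      rcases Multiset.mem_cons.mp hmem with he | he
      · injection he with hl hb
        injection hl with hh ht
        injection hh with ho hi
        exact LOp.noConfusion ho
      · rw [Multiset.mem_singleton] at he
        injection he with hl hb
        injection hl with hh ht
        injection hh with ho hi
        exact LOp.noConfusion ho
  rintro ⟨t, hch, hsucc⟩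
  have ht := rtg_stuck hstuck t hch
  rw [ht] at hsucc
  simp [LSuccessful, hD] at hsucc

def SyncP0 : SProc := ([SSym.bang], true) ::ₘ {([SSym.ques], true)}
def SyncQf : SProc := (([], true) : SSub) ::ₘ {(([], true) : SSub)}

lemma step_SyncP0 : SysStep SyncP0 SyncQf :=
  ⟨[], [], true, true, 0, rfl, rfl⟩

lemma sysstep_from_SyncP0 {Q} (h : SysStep SyncP0 Q) : Q = SyncQf := by
  obtain ⟨u1, u2, b1, b2, R, h1, h2⟩ := h
  have ha : (SSym.bang :: u1, b1) ∈ SyncP0 := h1 ▸ Multiset.mem_cons_self _ _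
  simp only [SyncP0, Multiset.mem_cons, Multiset.mem_singleton, Prod.mk.injEq,
    List.cons.injEq] at ha
  rcases ha with ⟨⟨-, hu1⟩, hb1⟩ | ⟨⟨hbad, -⟩, -⟩
  · subst hu1 hb1
    have h1' : ({([SSym.ques], true)} : SProc) = (SSym.ques :: u2, b2) ::ₘ R := by
      have := h1
      rw [SyncP0] at this
      exact (Multiset.cons_inj_right _).mp this
    rw [Multiset.singleton_eq_cons_iff] at h1'
    obtain ⟨heq, hR⟩ := h1'
    obtain ⟨hl, hb2⟩ := Prod.mk.injEq .. ▸ heq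
    obtain ⟨-, hu2⟩ := List.cons.injEq .. ▸ hl
    rw [h2, ← hu2, ← hb2, hR]
    rfl
  · exact SSym.noConfusion hbad

lemma no_step_SyncQf {Q} (h : SysStep SyncQf Q) : False := by
  obtain ⟨u1, u2, b1, b2, R, h1, -⟩ := h
  have : (SSym.bang :: u1, b1) ∈ SyncQf := h1 ▸ Multiset.mem_cons_self _ _
  simp [SyncQf] at this

lemma smust_SyncP0 : SMustConv SyncP0 := by
  intro Q hQ
  have hsq : SSuccessful SyncQf := by simp [SyncQf, SSuccessful]
  have hcases : Q = SyncP0 ∨ Q = SyncQf := by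
    induction hQ with
    | refl => exact Or.inl rfl
    | tail h1 h2 ih =>
      rcases ih with rfl | rfl
      · exact Or.inr (sysstep_from_SyncP0 h2)
      · exact absurd h2 (fun h => no_step_SyncQf h)
  rcases hcases with rfl | rfl
  · exact ⟨SyncQf, Relation.ReflTransGen.single step_SyncP0, hsq⟩
  · exact ⟨SyncQf, Relation.ReflTransGen.refl, hsq⟩

lemma deadlockable (IS : Store 2) (s t : List (LSym 2))
    (hs : ∃ rest, SoloBlocked IS s 0 rest)
    (ht : ∃ r rest', t = r ++ (LOp.put, (0 : Fin 2)) :: rest' ∧ ∀ x ∈ r, x.2 ≠ 0) :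
    ¬ LMustConv (((s, true) ::ₘ {(t, true)} : LProc 2), IS) := by
  obtain ⟨rest, C, hch, hC0⟩ := hs
  obtain ⟨r, rest', hteq, hfree⟩ := ht
  have ch1 : Relation.ReflTransGen LockStep ((s, true) ::ₘ {(t, true)}, IS)
      (((LOp.put, (0 : Fin 2)) :: rest, true) ::ₘ {(t, true)}, C) :=
    lift_chain hch s ((LOp.put, 0) :: rest) IS C rfl rfl true {(t, true)}
  obtain ⟨j, l, C', hch2, hj, h0'⟩ :=
    run_free r C hfree hC0 rest' true ((LOp.put, (0 : Fin 2)) :: rest, true)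
  have ch2 : Relation.ReflTransGen LockStep
      (((LOp.put, (0 : Fin 2)) :: rest, true) ::ₘ {(t, true)}, C)
      (((LOp.put, j) :: l, true) ::ₘ {((LOp.put, (0 : Fin 2)) :: rest, true)}, C') := by
    rw [show (((LOp.put, (0 : Fin 2)) :: rest, true) ::ₘ {(t, true)} : LProc 2)
        = (t, true) ::ₘ {((LOp.put, (0 : Fin 2)) :: rest, true)} from Multiset.cons_swap .., hteq]
    exact hch2
  intro hmust
  exact deadlock_no_may j 0 l rest true true C' hj h0'
    (hmust _ (ch1.trans ch2))

end AuxProof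

/-- for two locks, the blocking types `(P_1P_1, P_1)`,
`(P_1, P_1P_1)` and `(P_1, P_1)` are impossible for a correct translation. -/
theorem no_blocking_types_PP_P :
    ∀ (IS : Store 2) (tb tq : List (LSym 2)),
      Correct IS tb tq →
      ¬ (BlockingTypePP IS tb 0 ∧ BlockingTypeP IS tq 0) ∧
      ¬ (BlockingTypeP IS tb 0 ∧ BlockingTypePP IS tq 0) ∧
      ¬ (BlockingTypeP IS tb 0 ∧ BlockingTypeP IS tq 0) := by
  intro IS tb tq hcorr
  have hmust : LMustConv (((tb, true) ::ₘ {(tq, true)} : LProc 2), IS) := by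
    have h := (hcorr SyncP0).2.mp smust_SyncP0
    have htr : transProc tb tq SyncP0 = ((tb, true) ::ₘ {(tq, true)} : LProc 2) := by
      simp [transProc, SyncP0, transSub]
    rwa [htr] at h
  have hmust' : LMustConv (((tq, true) ::ₘ {(tb, true)} : LProc 2), IS) := by
    rw [show ((tq, true) ::ₘ {(tb, true)} : LProc 2)
        = (tb, true) ::ₘ {(tq, true)} from Multiset.cons_swap ..]
    exact hmust
  refine ⟨?_, ?_, ?_⟩
  · rintro ⟨⟨r1, r2, rest, -, -, hsb⟩, ⟨r, rest', heq, hfree, -⟩⟩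
    exact deadlockable IS tb tq ⟨rest, hsb⟩ ⟨r, rest', heq, hfree⟩ hmust
  · rintro ⟨⟨r, rest', heq, hfree, -⟩, ⟨r1, r2, rest, -, -, hsb⟩⟩
    exact deadlockable IS tq tb ⟨rest, hsb⟩ ⟨r, rest', heq, hfree⟩ hmust'
  · rintro ⟨⟨r1, rest1, heq1, hfree1, hsb1⟩, ⟨r, rest', heq, hfree, -⟩⟩
    exact deadlockable IS tb tq ⟨rest1, hsb1⟩ ⟨r, rest', heq, hfree⟩ hmust
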